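/- Composition with a channel is a contraction for the dual diamond norm: if χ: B(K) → B(K') is a channel and ψ: B(H) → B(K) is Hermitian-preserving, then ‖χ ∘ ψ‖^⋄ ≤ ‖ψ‖^⋄, and similarly ‖ψ ∘ ξ‖^⋄ ≤ ‖ψ‖^⋄ for any channel ξ: B(H') → B(H). -/

import Mathlib

open scoped Matrix Kronecker ComplexOrder Matrix.Norms.L2Operator

noncomputable section

/-- Square complex matrices indexed by `ι`. -/
abbrev Mat (ι : Type) [Fintype ι] [DecidableEq ι] : Type := Matrix ι ι ℂ

/-- Linear maps between matrix algebras. -/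
abbrev MatMap (ι κ : Type) [Fintype ι] [DecidableEq ι] [Fintype κ] [DecidableEq κ] : Type :=
  Mat ι →ₗ[ℂ] Mat κ

variable {ι κ μ ν : Type} [Fintype ι] [DecidableEq ι] [Fintype κ] [DecidableEq κ]
  [Fintype μ] [DecidableEq μ] [Fintype ν] [DecidableEq ν]

/-- `φ ⊗ id_τ`, the amplification of `φ` with the identity on `Mat τ`. -/
def tensorId (φ : MatMap ι κ) (τ : Type) [Fintype τ] [DecidableEq τ] :
    Matrix (ι × τ) (ι × τ) ℂ →ₗ[ℂ] Matrix (κ × τ) (κ × τ) ℂ where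
  toFun X := Matrix.of fun p q => φ (Matrix.of fun i j => X (i, p.2) (j, q.2)) p.1 q.1
  map_add' X Y := by
    funext p q
    show φ (Matrix.of fun i j => (X + Y) (i, p.2) (j, q.2)) p.1 q.1 = _
    rw [show (Matrix.of fun i j => (X + Y) (i, p.2) (j, q.2))
        = (Matrix.of fun i j => X (i, p.2) (j, q.2))
          + (Matrix.of fun i j => Y (i, p.2) (j, q.2)) from rfl, map_add]
    rfl
  map_smul' c X := by
    funext p q
    show φ (Matrix.of fun i j => (c • X) (i, p.2) (j, q.2)) p.1 q.1 = _
    rw [show (Matrix.of fun i j => (c • X) (i, p.2) (j, q.2))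
        = c • (Matrix.of fun i j => X (i, p.2) (j, q.2)) from rfl, map_smul]
    rfl

/-- `φ` is Hermitian-preserving. -/
def IsHermitianPreserving (φ : MatMap ι κ) : Prop := ∀ X, (φ X)ᴴ = φ Xᴴ

/-- `φ` is completely positive: all amplifications by finite-dimensional identities
preserve positive semidefiniteness. -/
def IsCP (φ : MatMap ι κ) : Prop :=
  ∀ (l : ℕ) (X : Matrix (ι × Fin l) (ι × Fin l) ℂ), X.PosSemidef →
    (tensorId φ (Fin l) X).PosSemidef

/-- `φ` is trace-preserving. -/
def IsTP (φ : MatMap ι κ) : Prop := ∀ X, (φ X).trace = X.trace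

/-- A channel is a completely positive trace-preserving map. -/
def IsChannel (φ : MatMap ι κ) : Prop := IsCP φ ∧ IsTP φ

/-- Density operator. -/
def IsState (σ : Mat ι) : Prop := σ.PosSemidef ∧ σ.trace = 1

/-- The Choi matrix of `φ`. -/
def choiMatrix (φ : MatMap ι κ) : Matrix (κ × ι) (κ × ι) ℂ :=
  Matrix.of fun p q => φ (Matrix.single p.2 q.2 1) p.1 q.1

/-- The tracelike functional `s`. -/
def sFun (φ : MatMap ι ι) : ℂ :=
  ∑ i, ∑ j, φ (Matrix.single i j 1) i j

/-- The pairing `⟨ψ, φ⟩ = s(ψ ∘ φ)`. -/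
def pairing (ψ : MatMap κ ι) (φ : MatMap ι κ) : ℂ := sFun (ψ ∘ₗ φ)

/-- The erasure map `A ↦ Tr[A] σ`. -/
def erasure (σ : Mat κ) : MatMap ι κ :=
  (Matrix.traceLinearMap ι ℂ ℂ).smulRight σ

/-- The diamond norm, via its order-theoretic characterization. -/
noncomputable def diamondNorm (φ : MatMap ι κ) : ℝ :=
  sInf {r : ℝ | 0 < r ∧ ∃ α : MatMap ι κ, IsChannel α ∧
    IsCP ((r : ℂ) • α - φ) ∧ IsCP ((r : ℂ) • α + φ)}

/-- The dual diamond norm, via its order-theoretic characterization. -/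
noncomputable def dualDiamondNorm (ψ : MatMap ι κ) : ℝ :=
  sInf {r : ℝ | 0 < r ∧ ∃ σ : Mat κ, IsState σ ∧
    IsCP ((r : ℂ) • erasure (ι := ι) σ - ψ) ∧ IsCP ((r : ℂ) • erasure (ι := ι) σ + ψ)}

/-- The Hilbert–Schmidt (trace-duality) adjoint of `ψ`. -/
def adjointMap (ψ : MatMap ι κ) : MatMap κ ι where
  toFun A := Matrix.of fun i j => (A * ψ (Matrix.single j i 1)).trace
  map_add' A B := by funext i j; simp [Matrix.add_mul]
  map_smul' c A := by funext i j; simp [Matrix.smul_mul]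

/-- The cq-map associated with a family of operators. -/
def cqMap {n : ℕ} (A : Fin n → Mat ι) : MatMap (Fin n) ι where
  toFun X := ∑ i, X i i • A i
  map_add' X Y := by simp [Matrix.add_apply, add_smul, Finset.sum_add_distrib]
  map_smul' c X := by simp [Matrix.smul_apply, smul_smul, Finset.smul_sum]

/-- The qc-map associated with a family of operators. -/
def qcMap {n : ℕ} (B : Fin n → Mat ι) : MatMap ι (Fin n) where
  toFun X := Matrix.diagonal fun i => (X * B i).trace
  map_add' X Y := by
    funext i j
    by_cases h : i = j <;>
      simp [Matrix.add_mul, Matrix.diagonal, Matrix.of_apply, h]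
  map_smul' c X := by
    funext i j
    by_cases h : i = j <;>
      simp [Matrix.smul_mul, Matrix.diagonal, Matrix.of_apply, h]

/-- A POVM with `n` outcomes. -/
def IsPOVM {n : ℕ} (M : Fin n → Mat ι) : Prop :=
  (∀ i, (M i).PosSemidef) ∧ ∑ i, M i = 1

/-- An ensemble: probabilities with states. -/
def IsEnsemble {n : ℕ} (lam : Fin n → ℝ) (σ : Fin n → Mat ι) : Prop :=
  (∀ i, 0 < lam i) ∧ (∑ i, lam i = 1) ∧ ∀ i, IsState (σ i)

/-- Optimal success probability of guessing among the states of an ensemble. -/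
noncomputable def pSucc {n : ℕ} (lam : Fin n → ℝ) (σ : Fin n → Mat ι) : ℝ :=
  sSup {r : ℝ | ∃ M : Fin n → Mat ι, IsPOVM M ∧
    r = ∑ i, lam i * ((M i * σ i).trace).re}

/-- Trace norm `‖A‖₁ = Tr √(AᴴA)`. -/
noncomputable def traceNorm (A : Mat ι) : ℝ :=
  ((Matrix.posSemidef_conjTranspose_mul_self A).isHermitian.eigenvectorUnitary.1 *
    Matrix.diagonal ((fun x : ℝ => (x : ℂ)) ∘ (√·) ∘ (Matrix.posSemidef_conjTranspose_mul_self A).isHermitian.eigenvalues) *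
    (star (Matrix.posSemidef_conjTranspose_mul_self A).isHermitian.eigenvectorUnitary : Matrix ι ι ℂ)).trace.re

/-- Le Cam deficiency of `Φ` with respect to `Ψ`. -/
noncomputable def deficiency (Φ : MatMap ι κ) (Ψ : MatMap ι μ) : ℝ :=
  sInf {r : ℝ | ∃ α : MatMap μ κ, IsChannel α ∧ r = diamondNorm (Φ - α ∘ₗ Ψ)}

section AuxLemmas

variable {ι' κ' μ' : Type} [Fintype ι'] [DecidableEq ι'] [Fintype κ'] [DecidableEq κ']
  [Fintype μ'] [DecidableEq μ']

lemma aux_tensorId_comp (φ : MatMap ι' κ') (χ : MatMap κ' μ') (τ : Type) [Fintype τ]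
    [DecidableEq τ] (X : Matrix (ι' × τ) (ι' × τ) ℂ) :
    tensorId (χ ∘ₗ φ) τ X = tensorId χ τ (tensorId φ τ X) := rfl

lemma aux_IsCP_comp {φ : MatMap ι' κ'} {χ : MatMap κ' μ'} (hχ : IsCP χ) (hφ : IsCP φ) :
    IsCP (χ ∘ₗ φ) := by
  intro l X hX
  rw [show tensorId (χ ∘ₗ φ) (Fin l) X = tensorId χ (Fin l) (tensorId φ (Fin l) X) from rfl]
  exact hχ l _ (hφ l X hX)

lemma aux_psd_add {n : Type} [Fintype n] {A B : Matrix n n ℂ} (hA : A.PosSemidef)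
    (hB : B.PosSemidef) : (A + B).PosSemidef := by
  exact hA.add hB

lemma aux_psd_sum {n α : Type} [Fintype n] [Fintype α] (f : α → Matrix n n ℂ)
    (h : ∀ a, (f a).PosSemidef) : (∑ a, f a).PosSemidef := by
  classical
  refine Finset.sum_induction f _ (fun a b ha hb => aux_psd_add ha hb) ?_ (fun a _ => h a)
  exact Matrix.PosSemidef.zero

end AuxLemmas
section AuxLemmas2

variable {ι' κ' μ' : Type} [Fintype ι'] [DecidableEq ι'] [Fintype κ'] [DecidableEq κ']
  [Fintype μ'] [DecidableEq μ']

lemma aux_erasure_apply (σ : Mat κ') (A : Mat ι') : erasure σ A = A.trace • σ := rfl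

lemma aux_comp_erasure (χ : MatMap κ' μ') (σ : Mat κ') :
    χ ∘ₗ erasure (ι := ι') σ = erasure (ι := ι') (χ σ) := by
  apply LinearMap.ext; intro A
  show χ (A.trace • σ) = A.trace • χ σ
  rw [map_smul]

lemma aux_erasure_comp (ξ : MatMap μ' ι') (hξ : IsTP ξ) (σ : Mat κ') :
    erasure (ι := ι') σ ∘ₗ ξ = erasure (ι := μ') σ := by
  apply LinearMap.ext; intro A
  show (ξ A).trace • σ = A.trace • σ
  rw [hξ]

lemma aux_cp_psd {φ : MatMap ι' κ'} (hφ : IsCP φ) {σ : Mat ι'} (hσ : σ.PosSemidef) :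
    (φ σ).PosSemidef := by
  set X : Matrix (ι' × Fin 1) (ι' × Fin 1) ℂ := Matrix.of fun p q => σ p.1 q.1 with hXdef
  have hX : X.PosSemidef := by
    refine Matrix.PosSemidef.of_dotProduct_mulVec_nonneg ?_ ?_
    · ext p q
      exact hσ.1.apply p.1 q.1
    · intro x
      have h2 := hσ.dotProduct_mulVec_nonneg (fun i => x (i, 0))
      have : dotProduct (star x) (X *ᵥ x)
          = dotProduct (star fun i => x (i, 0)) (σ *ᵥ fun i => x (i, 0)) := by
        simp [dotProduct, Matrix.mulVec, Fintype.sum_prod_type, hXdef,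
          Finset.univ_unique, Finset.sum_singleton]
      rw [this]; exact h2
  have key : φ σ = (tensorId φ (Fin 1) X).submatrix (fun j => (j, (0 : Fin 1)))
      (fun j => (j, (0 : Fin 1))) := rfl
  rw [key]
  exact (hφ 1 X hX).submatrix _

end AuxLemmas2
section AuxLemmas3

variable {ι' κ' μ' : Type} [Fintype ι'] [DecidableEq ι'] [Fintype κ'] [DecidableEq κ']
  [Fintype μ'] [DecidableEq μ']

set_option linter.unusedSectionVars false in
lemma aux_stdBasis_conjTranspose (i j : ι') :
    (Matrix.single i j (1 : ℂ))ᴴ = Matrix.single j i 1 := by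
  ext a b
  simp [Matrix.single, Matrix.conjTranspose_apply, and_comm]

lemma aux_choi_herm {ψ : MatMap ι' κ'} (hψ : IsHermitianPreserving ψ) :
    (choiMatrix ψ).IsHermitian := by
  ext p q
  show star (choiMatrix ψ q p) = choiMatrix ψ p q
  have h1 : star (ψ (Matrix.single q.2 p.2 1) q.1 p.1)
      = (ψ (Matrix.single q.2 p.2 1))ᴴ p.1 q.1 := rfl
  show star (ψ (Matrix.single q.2 p.2 1) q.1 p.1) = ψ (Matrix.single p.2 q.2 1) p.1 q.1
  rw [h1, hψ, aux_stdBasis_conjTranspose]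

lemma aux_choi_smul_sub (c : ℂ) (α ψ : MatMap ι' κ') :
    choiMatrix (c • α - ψ) = c • choiMatrix α - choiMatrix ψ := by
  ext p q
  simp [choiMatrix, Matrix.sub_apply, Matrix.smul_apply]

lemma aux_choi_smul_add (c : ℂ) (α ψ : MatMap ι' κ') :
    choiMatrix (c • α + ψ) = c • choiMatrix α + choiMatrix ψ := by
  ext p q
  simp [choiMatrix, Matrix.add_apply, Matrix.smul_apply]

lemma aux_choi_erasure_smul_one (c : ℂ) :
    choiMatrix (erasure (ι := ι') (c • (1 : Mat κ'))) = c • (1 : Matrix (κ' × ι') (κ' × ι') ℂ) := by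
  ext p q
  show ((Matrix.single p.2 q.2 (1:ℂ)).trace • (c • (1 : Mat κ'))) p.1 q.1 = _
  have ht : (Matrix.single p.2 q.2 (1:ℂ)).trace = if p.2 = q.2 then 1 else 0 := by
    by_cases h : p.2 = q.2
    · rw [if_pos h, h]
      simp [Matrix.trace, Matrix.diag, Matrix.single, Finset.sum_ite_eq]
    · simp only [Matrix.trace, Matrix.diag, Matrix.single, Matrix.of_apply, if_neg h]
      rw [Finset.sum_eq_zero]
      intro i _
      rw [if_neg]
      intro hc
      exact h (hc.1.trans hc.2.symm)
  rw [ht]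
  by_cases h2 : p.2 = q.2 <;> by_cases h1 : p.1 = q.1 <;>
    simp [Matrix.smul_apply, Matrix.one_apply, h1, h2, Prod.ext_iff]

end AuxLemmas3
section AuxLemmas4

variable {ι' κ' μ' : Type} [Fintype ι'] [DecidableEq ι'] [Fintype κ'] [DecidableEq κ']
  [Fintype μ'] [DecidableEq μ']

lemma aux_map_apply_eq_sum (α : MatMap ι' κ') (Y : Mat ι') (j j' : κ') :
    α Y j j' = ∑ i, ∑ i', Y i i' * choiMatrix α (j, i) (j', i') := by
  conv_lhs => rw [Matrix.matrix_eq_sum_single Y]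
  rw [map_sum, Matrix.sum_apply]
  refine Finset.sum_congr rfl fun i _ => ?_
  rw [map_sum, Matrix.sum_apply]
  refine Finset.sum_congr rfl fun i' _ => ?_
  have hE : Matrix.single i i' (Y i i') = Y i i' • Matrix.single i i' (1:ℂ) := by
    rw [Matrix.smul_single, smul_eq_mul, mul_one]
  rw [hE, map_smul, Matrix.smul_apply, smul_eq_mul]
  rfl

open scoped MatrixOrder in
lemma aux_choi_cp {α : MatMap ι' κ'} (h : (choiMatrix α).PosSemidef) : IsCP α := by
  obtain ⟨B, hB⟩ := CStarAlgebra.nonneg_iff_eq_star_mul_self.mp h.nonneg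
  have hC : ∀ p q : κ' × ι', choiMatrix α p q = ∑ a : κ' × ι', star (B a p) * B a q := by
    intro p q
    rw [hB]
    simp [Matrix.mul_apply, Matrix.conjTranspose_apply]
  intro l X hX
  set K : (κ' × ι') → Matrix (κ' × Fin l) (ι' × Fin l) ℂ :=
    fun a => Matrix.of fun p q => star (B a (p.1, q.1)) * (if p.2 = q.2 then 1 else 0) with hK
  have key : tensorId α (Fin l) X = ∑ a : κ' × ι', K a * X * (K a)ᴴ := by
    funext p q
    show α (Matrix.of fun i i' => X (i, p.2) (i', q.2)) p.1 q.1 = _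
    rw [aux_map_apply_eq_sum, Matrix.sum_apply]
    have hterm : ∀ a : κ' × ι', (K a * X * (K a)ᴴ) p q
        = ∑ i, ∑ i', star (B a (p.1, i)) * X (i, p.2) (i', q.2) * B a (q.1, i') := by
      intro a
      simp only [Matrix.mul_apply, Matrix.conjTranspose_apply, hK, Matrix.of_apply,
        Fintype.sum_prod_type, star_mul', star_star, apply_ite (star : ℂ → ℂ), star_one,
        star_zero, ite_mul, mul_ite, mul_zero, zero_mul, mul_one, one_mul,
        Finset.sum_ite_eq, Finset.sum_ite_eq', Finset.mem_univ, if_true,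
        Finset.sum_mul, Finset.mul_sum]
      rw [Finset.sum_comm]
    simp only [hterm, hC]
    conv_rhs => rw [Finset.sum_comm]
    refine Finset.sum_congr rfl fun i _ => ?_
    conv_rhs => rw [Finset.sum_comm]
    refine Finset.sum_congr rfl fun i' _ => ?_
    rw [Finset.mul_sum]
    exact Finset.sum_congr rfl fun a _ => by simp only [Matrix.of_apply]; ring
  rw [key]
  exact aux_psd_sum _ fun a => hX.mul_mul_conjTranspose_same (K a)

end AuxLemmas4
section AuxLemmas5

lemma aux_quad_real {n : Type} [Fintype n] {C : Matrix n n ℂ} (hC : C.IsHermitian) (x : n → ℂ) :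
    star (dotProduct (star x) (C *ᵥ x)) = dotProduct (star x) (C *ᵥ x) := by
  conv_lhs => rw [Matrix.star_dotProduct, star_star, Matrix.star_mulVec, hC.eq,
    ← Matrix.dotProduct_mulVec]

lemma aux_shift_psd_one {n : Type} [Fintype n] [DecidableEq n] {C : Matrix n n ℂ}
    (hC : C.IsHermitian) (t : ℝ) (ht : ∑ p, ∑ q, ‖C p q‖ ≤ t) :
    (((t : ℂ)) • 1 + C).PosSemidef := by
  set S : ℝ := ∑ p, ∑ q, ‖C p q‖ with hSdef
  have hS0 : 0 ≤ S :=
    Finset.sum_nonneg fun p _ => Finset.sum_nonneg fun q _ => norm_nonneg _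
  refine Matrix.PosSemidef.of_dotProduct_mulVec_nonneg ?_ ?_
  · show _ᴴ = _
    rw [Matrix.conjTranspose_add, Matrix.conjTranspose_smul, Matrix.conjTranspose_one, hC.eq]
    norm_num [Complex.star_def, Complex.conj_ofReal]
  · intro x
    rw [Matrix.add_mulVec, dotProduct_add, Matrix.smul_mulVec, Matrix.one_mulVec,
      dotProduct_smul]
    set N : ℝ := ∑ i, Complex.normSq (x i) with hNdef
    have hN0 : 0 ≤ N := Finset.sum_nonneg fun i _ => Complex.normSq_nonneg _
    have hsq : ∀ p, ‖x p‖ ^ 2 ≤ N := by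
      intro p
      have h1 : Complex.normSq (x p) ≤ N :=
        Finset.single_le_sum (fun i _ => Complex.normSq_nonneg (x i)) (Finset.mem_univ p)
      rwa [← Complex.sq_norm] at h1
    set z := dotProduct (star x) (C *ᵥ x) with hzdef
    have hzre : (z.re : ℂ) = z := by
      refine Complex.conj_eq_iff_re.mp ?_
      rw [← Complex.star_def]
      exact aux_quad_real hC x
    have hterm : ∀ p q, ‖star (x p) * (C p q * x q)‖ ≤ ‖C p q‖ * N := by
      intro p q
      rw [norm_mul, norm_mul, Complex.star_def, Complex.norm_conj]
      have hab : ‖x p‖ * ‖x q‖ ≤ N := by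
        nlinarith [hsq p, hsq q, sq_nonneg (‖x p‖ - ‖x q‖)]
      calc ‖x p‖ * (‖C p q‖ * ‖x q‖)
          = ‖C p q‖ * (‖x p‖ * ‖x q‖) := by ring
        _ ≤ ‖C p q‖ * N :=
            mul_le_mul_of_nonneg_left hab (norm_nonneg _)
    have habs : ‖z‖ ≤ S * N := by
      have hz2 : z = ∑ p, ∑ q, star (x p) * (C p q * x q) := by
        simp [hzdef, dotProduct, Matrix.mulVec, Finset.mul_sum]
      have h1 : ‖z‖ ≤ ∑ p, ∑ q, ‖star (x p) * (C p q * x q)‖ := by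
        rw [hz2]
        refine (norm_sum_le _ _).trans (Finset.sum_le_sum fun p _ => ?_)
        exact norm_sum_le _ _
      refine h1.trans ?_
      rw [hSdef, Finset.sum_mul]
      refine Finset.sum_le_sum fun p _ => ?_
      rw [Finset.sum_mul]
      exact Finset.sum_le_sum fun q _ => hterm p q
    have hNx : dotProduct (star x) x = (N : ℂ) := by
      simp only [dotProduct, Pi.star_apply, hNdef, Complex.ofReal_sum]
      refine Finset.sum_congr rfl fun i _ => ?_
      rw [Complex.star_def, ← Complex.normSq_eq_conj_mul_self]
    rw [hNx, ← hzre, smul_eq_mul, ← Complex.ofReal_mul, ← Complex.ofReal_add,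
      Complex.zero_le_real]
    nlinarith [Complex.abs_re_le_norm z, habs, abs_le.mp (le_refl |z.re|)]

lemma aux_shift_psd {n : Type} [Fintype n] [DecidableEq n] {C : Matrix n n ℂ}
    (hC : C.IsHermitian) :
    ∃ t : ℝ, 0 < t ∧ ((((t : ℂ)) • 1 - C).PosSemidef ∧ (((t : ℂ)) • 1 + C).PosSemidef) := by
  have hS0 : 0 ≤ ∑ p, ∑ q, ‖C p q‖ :=
    Finset.sum_nonneg fun p _ => Finset.sum_nonneg fun q _ => norm_nonneg _
  refine ⟨(∑ p, ∑ q, ‖C p q‖) + 1, by linarith, ?_, ?_⟩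
  · rw [sub_eq_add_neg]
    refine aux_shift_psd_one hC.neg _ ?_
    simp only [Matrix.neg_apply, norm_neg]
    linarith
  · exact aux_shift_psd_one hC _ (by linarith)

end AuxLemmas5
section AuxLemmas6

variable {ι' κ' μ' : Type} [Fintype ι'] [DecidableEq ι'] [Fintype κ'] [DecidableEq κ']
  [Fintype μ'] [DecidableEq μ']

lemma aux_smul_one_psd {n : Type} [Fintype n] [DecidableEq n] {c : ℝ} (hc : 0 ≤ c) :
    (((c : ℂ)) • (1 : Matrix n n ℂ)).PosSemidef := by
  have h := aux_shift_psd_one (C := (0 : Matrix n n ℂ)) Matrix.isHermitian_zero c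
    (by simpa using hc)
  simpa using h

lemma aux_choi_smul (c : ℂ) (α : MatMap ι' κ') : choiMatrix (c • α) = c • choiMatrix α := by
  ext p q
  simp [choiMatrix, Matrix.smul_apply]

lemma aux_state_inv_card [Nonempty κ'] :
    IsState ((((Fintype.card κ' : ℝ)⁻¹ : ℝ) : ℂ) • (1 : Mat κ')) := by
  have hk : 0 < (Fintype.card κ' : ℝ) := by exact_mod_cast Fintype.card_pos
  constructor
  · exact aux_smul_one_psd (by positivity)
  · have hne : (Fintype.card κ' : ℂ) ≠ 0 := Nat.cast_ne_zero.mpr Fintype.card_pos.ne'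
    rw [Matrix.trace_smul, Matrix.trace_one, smul_eq_mul, Complex.ofReal_inv]
    push_cast
    field_simp

lemma aux_mem_set (φ : MatMap ι' κ') (hφ : (choiMatrix φ).IsHermitian) [Nonempty κ'] :
    ∃ r : ℝ, 0 < r ∧ ∃ σ : Mat κ', IsState σ ∧
      IsCP ((r : ℂ) • erasure (ι := ι') σ - φ) ∧ IsCP ((r : ℂ) • erasure (ι := ι') σ + φ) := by
  obtain ⟨t, ht0, hsub, hadd⟩ := aux_shift_psd hφ
  have hk : 0 < (Fintype.card κ' : ℝ) := by exact_mod_cast Fintype.card_pos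
  set c : ℝ := (Fintype.card κ' : ℝ)⁻¹ with hc
  have hscal : (((Fintype.card κ' : ℝ) * t : ℝ) : ℂ) • (((c : ℝ) : ℂ)
      • (1 : Matrix (κ' × ι') (κ' × ι') ℂ)) = ((t : ℝ) : ℂ) • 1 := by
    rw [smul_smul, ← Complex.ofReal_mul]
    congr 2
    rw [hc]
    field_simp
  refine ⟨(Fintype.card κ' : ℝ) * t, by positivity, ((c : ℝ) : ℂ) • 1,
    aux_state_inv_card, ?_, ?_⟩
  · apply aux_choi_cp
    rw [aux_choi_smul_sub, aux_choi_erasure_smul_one, hscal]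
    exact hsub
  · apply aux_choi_cp
    rw [aux_choi_smul_add, aux_choi_erasure_smul_one, hscal]
    exact hadd

lemma aux_dual_empty (φ : MatMap ι' κ') [IsEmpty κ'] : dualDiamondNorm φ = 0 := by
  have hempty : ∀ r : ℝ, ¬ (0 < r ∧ ∃ σ : Mat κ', IsState σ ∧
      IsCP ((r : ℂ) • erasure (ι := ι') σ - φ) ∧ IsCP ((r : ℂ) • erasure (ι := ι') σ + φ)) := by
    rintro r ⟨hr, σ, ⟨hσ1, hσ2⟩, -⟩
    have h0 : σ.trace = 0 := by
      rw [Matrix.trace, Finset.univ_eq_empty, Finset.sum_empty]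
    rw [h0] at hσ2
    exact one_ne_zero hσ2.symm
  have h2 : {r : ℝ | 0 < r ∧ ∃ σ : Mat κ', IsState σ ∧
      IsCP ((r : ℂ) • erasure (ι := ι') σ - φ) ∧ IsCP ((r : ℂ) • erasure (ι := ι') σ + φ)}
      = (∅ : Set ℝ) := Set.eq_empty_iff_forall_notMem.mpr hempty
  rw [dualDiamondNorm]
  exact (congrArg sInf h2).trans Real.sInf_empty

lemma aux_zero_mem [Nonempty κ'] (r : ℝ) (hr : 0 < r) :
    0 < r ∧ ∃ σ : Mat κ', IsState σ ∧
      IsCP ((r : ℂ) • erasure (ι := ι') σ - (0 : MatMap ι' κ')) ∧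
      IsCP ((r : ℂ) • erasure (ι := ι') σ + (0 : MatMap ι' κ')) := by
  have hk : 0 < (Fintype.card κ' : ℝ) := by exact_mod_cast Fintype.card_pos
  set c : ℝ := (Fintype.card κ' : ℝ)⁻¹ with hc
  have hcp : IsCP ((r : ℂ) • erasure (ι := ι') (((c : ℝ) : ℂ) • (1 : Mat κ'))) := by
    apply aux_choi_cp
    rw [aux_choi_smul, aux_choi_erasure_smul_one, smul_smul, ← Complex.ofReal_mul]
    exact aux_smul_one_psd (by positivity)
  exact ⟨hr, ((c : ℝ) : ℂ) • 1, aux_state_inv_card,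
    by rwa [sub_zero], by rwa [add_zero]⟩

lemma aux_transfer_left {φ : MatMap ι' κ'} {χ : MatMap κ' μ'} (hχ : IsChannel χ) {r : ℝ}
    (hmem : 0 < r ∧ ∃ σ : Mat κ', IsState σ ∧
      IsCP ((r : ℂ) • erasure (ι := ι') σ - φ) ∧ IsCP ((r : ℂ) • erasure (ι := ι') σ + φ)) :
    0 < r ∧ ∃ σ' : Mat μ', IsState σ' ∧
      IsCP ((r : ℂ) • erasure (ι := ι') σ' - χ ∘ₗ φ) ∧
      IsCP ((r : ℂ) • erasure (ι := ι') σ' + χ ∘ₗ φ) := by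
  obtain ⟨hr, σ, ⟨hσp, hσt⟩, h1, h2⟩ := hmem
  have heq1 : (r : ℂ) • erasure (ι := ι') (χ σ) - χ ∘ₗ φ
      = χ ∘ₗ ((r : ℂ) • erasure (ι := ι') σ - φ) := by
    apply LinearMap.ext; intro A
    simp [aux_erasure_apply, map_smul, map_sub]
  have heq2 : (r : ℂ) • erasure (ι := ι') (χ σ) + χ ∘ₗ φ
      = χ ∘ₗ ((r : ℂ) • erasure (ι := ι') σ + φ) := by
    apply LinearMap.ext; intro A
    simp [aux_erasure_apply, map_smul, map_add]
  refine ⟨hr, χ σ, ⟨aux_cp_psd hχ.1 hσp, by rw [hχ.2 σ, hσt]⟩, ?_, ?_⟩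
  · rw [heq1]; exact aux_IsCP_comp hχ.1 h1
  · rw [heq2]; exact aux_IsCP_comp hχ.1 h2

lemma aux_transfer_right {φ : MatMap ι' κ'} {ξ : MatMap μ' ι'} (hξ : IsChannel ξ) {r : ℝ}
    (hmem : 0 < r ∧ ∃ σ : Mat κ', IsState σ ∧
      IsCP ((r : ℂ) • erasure (ι := ι') σ - φ) ∧ IsCP ((r : ℂ) • erasure (ι := ι') σ + φ)) :
    0 < r ∧ ∃ σ : Mat κ', IsState σ ∧
      IsCP ((r : ℂ) • erasure (ι := μ') σ - φ ∘ₗ ξ) ∧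
      IsCP ((r : ℂ) • erasure (ι := μ') σ + φ ∘ₗ ξ) := by
  obtain ⟨hr, σ, hσ, h1, h2⟩ := hmem
  have heq1 : (r : ℂ) • erasure (ι := μ') σ - φ ∘ₗ ξ
      = ((r : ℂ) • erasure (ι := ι') σ - φ) ∘ₗ ξ := by
    apply LinearMap.ext; intro A
    simp [aux_erasure_apply, hξ.2 A]
  have heq2 : (r : ℂ) • erasure (ι := μ') σ + φ ∘ₗ ξ
      = ((r : ℂ) • erasure (ι := ι') σ + φ) ∘ₗ ξ := by
    apply LinearMap.ext; intro A
    simp [aux_erasure_apply, hξ.2 A]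
  refine ⟨hr, σ, hσ, ?_, ?_⟩
  · rw [heq1]; exact aux_IsCP_comp h1 hξ.1
  · rw [heq2]; exact aux_IsCP_comp h2 hξ.1

end AuxLemmas6
theorem dualDiamondNorm_comp_channel {h h' k k' : ℕ}
    (ψ : MatMap (Fin h) (Fin k)) (hψ : IsHermitianPreserving ψ)
    (χ : MatMap (Fin k) (Fin k')) (hχ : IsChannel χ)
    (ξ : MatMap (Fin h') (Fin h)) (hξ : IsChannel ξ) :
    dualDiamondNorm (χ ∘ₗ ψ) ≤ dualDiamondNorm ψ
      ∧ dualDiamondNorm (ψ ∘ₗ ξ) ≤ dualDiamondNorm ψ := by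
  rcases Nat.eq_zero_or_pos k with hk | hk
  · subst hk
    have hψ0 : dualDiamondNorm ψ = 0 := aux_dual_empty ψ
    have hψξ0 : dualDiamondNorm (ψ ∘ₗ ξ) = 0 := aux_dual_empty _
    refine ⟨?_, by rw [hψ0, hψξ0]⟩
    rw [hψ0]
    have hzero : χ ∘ₗ ψ = 0 := by
      apply LinearMap.ext; intro A
      show χ (ψ A) = 0
      rw [Subsingleton.elim (ψ A) 0, map_zero]
    rw [hzero]
    rcases Nat.eq_zero_or_pos k' with hk' | hk'
    · subst hk'
      rw [aux_dual_empty _]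
    · haveI : Nonempty (Fin k') := ⟨⟨0, hk'⟩⟩
      refine le_of_forall_pos_le_add fun ε hε => ?_
      rw [zero_add]
      rw [dualDiamondNorm]
      exact csInf_le ⟨0, fun r hr => le_of_lt hr.1⟩ (aux_zero_mem ε hε)
  · haveI : Nonempty (Fin k) := ⟨⟨0, hk⟩⟩
    obtain ⟨r, hr0, hrest⟩ := aux_mem_set ψ (aux_choi_herm hψ)
    constructor
    · rw [dualDiamondNorm, dualDiamondNorm]
      exact csInf_le_csInf ⟨0, fun s hs => le_of_lt hs.1⟩ ⟨r, hr0, hrest⟩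
        fun s hs => aux_transfer_left hχ hs
    · rw [dualDiamondNorm, dualDiamondNorm]
      exact csInf_le_csInf ⟨0, fun s hs => le_of_lt hs.1⟩ ⟨r, hr0, hrest⟩
        fun s hs => aux_transfer_right hξ hs
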